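/- For every b, for all real x, the limit as a → ∞ (through positive reals) of Γ(a+b)/(a^b · Γ(a)) equals 1. -/

import Mathlib

open Filter Real

/-- The ratio function in question. -/
noncomputable def gammaRatio (b : ℝ) : ℝ → ℝ :=
  fun a => Real.Gamma (a + b) / (a ^ b * Real.Gamma a)

lemma tendsto_add_div (b : ℝ) :
    Tendsto (fun a : ℝ => (a + b) / a) atTop (nhds 1) := by
  have h : Tendsto (fun a : ℝ => 1 + b * a⁻¹) atTop (nhds 1) := by
    have := (tendsto_inv_atTop_zero.const_mul b).const_add (1 : ℝ)
    simpa using this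
  refine h.congr' ?_
  filter_upwards [eventually_gt_atTop (0 : ℝ)] with a ha
  rw [add_div, div_self (ne_of_gt ha), div_eq_mul_inv]

lemma gammaRatio_succ_eventuallyEq (b : ℝ) :
    gammaRatio (b + 1) =ᶠ[atTop] fun a => (a + b) / a * gammaRatio b a := by
  filter_upwards [eventually_gt_atTop (0 : ℝ), eventually_gt_atTop (-b)] with a ha hab
  have hab' : a + b > 0 := by linarith
  have h1 : Real.Gamma (a + (b + 1)) = (a + b) * Real.Gamma (a + b) := by
    rw [show a + (b + 1) = (a + b) + 1 by ring, Real.Gamma_add_one (ne_of_gt hab')]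
  have h2 : a ^ (b + 1) = a ^ b * a := by
    rw [Real.rpow_add ha, Real.rpow_one]
  simp only [gammaRatio, h1, h2]
  field_simp

lemma gammaRatio_succ_iff (b : ℝ) :
    Tendsto (gammaRatio (b + 1)) atTop (nhds 1) ↔
      Tendsto (gammaRatio b) atTop (nhds 1) := by
  constructor
  · intro h
    have hmul := h.mul ((tendsto_add_div b).inv₀ one_ne_zero)
    rw [mul_inv_cancel₀ one_ne_zero] at hmul
    refine hmul.congr' ?_
    filter_upwards [gammaRatio_succ_eventuallyEq b, eventually_gt_atTop (0 : ℝ),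
      eventually_gt_atTop (-b)] with a heq ha hab
    have hab' : a + b > 0 := by linarith
    rw [heq]
    field_simp
  · intro h
    have hmul := (tendsto_add_div b).mul h
    rw [one_mul] at hmul
    exact hmul.congr' (gammaRatio_succ_eventuallyEq b).symm

lemma gammaRatio_base {b : ℝ} (hb0 : 0 ≤ b) (hb1 : b ≤ 1) :
    Tendsto (gammaRatio b) atTop (nhds 1) := by
  have hconv := Real.convexOn_log_Gamma
  -- lower bound: (a/(a+b))^(1-b) ≤ ratio ; upper bound: ratio ≤ 1
  have hlow : Tendsto (fun a : ℝ => (a / (a + b)) ^ (1 - b)) atTop (nhds 1) := by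
    have h1 : Tendsto (fun a : ℝ => a / (a + b)) atTop (nhds 1) := by
      have := (tendsto_add_div b).inv₀ one_ne_zero
      rw [inv_one] at this
      refine this.congr' ?_
      filter_upwards [eventually_gt_atTop (0 : ℝ)] with a ha
      rw [inv_div]
    simpa using h1.rpow_const (Or.inl one_ne_zero)
  refine tendsto_of_tendsto_of_tendsto_of_le_of_le' hlow tendsto_const_nhds ?_ ?_
  · -- lower bound
    filter_upwards [eventually_ge_atTop (1 : ℝ)] with a ha
    have ha0 : (0:ℝ) < a := by linarith
    have hab : (0:ℝ) < a + b := by linarith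
    have hmem1 : a + b ∈ Set.Ioi (0:ℝ) := hab
    have hmem2 : a + b + 1 ∈ Set.Ioi (0:ℝ) := by simp; linarith
    have key := hconv.2 hmem1 hmem2 hb0 (by linarith : (0:ℝ) ≤ 1 - b) (by ring)
    have heq : b • (a + b) + (1 - b) • (a + b + 1) = a + 1 := by
      simp [smul_eq_mul]; ring
    rw [heq] at key
    simp only [Function.comp_apply, smul_eq_mul] at key
    -- key : log Γ(a+1) ≤ b * log Γ(a+b) + (1-b) * log Γ(a+b+1)
    have hG1 : Real.Gamma (a + 1) = a * Real.Gamma a := Real.Gamma_add_one (ne_of_gt ha0)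
    have hG2 : Real.Gamma (a + b + 1) = (a + b) * Real.Gamma (a + b) :=
      Real.Gamma_add_one (ne_of_gt hab)
    have hGab : 0 < Real.Gamma (a + b) := Real.Gamma_pos_of_pos hab
    have hGa : 0 < Real.Gamma a := Real.Gamma_pos_of_pos ha0
    rw [hG1, hG2, Real.log_mul (ne_of_gt ha0) (ne_of_gt hGa),
      Real.log_mul (ne_of_gt hab) (ne_of_gt hGab)] at key
    -- log a + log Γ a ≤ b log Γ(a+b) + (1-b)(log(a+b) + log Γ(a+b))
    --                 = log Γ(a+b) + (1-b) log(a+b)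
    have key2 : Real.log a + Real.log (Real.Gamma a) ≤
        Real.log (Real.Gamma (a + b)) + (1 - b) * Real.log (a + b) := by nlinarith
    -- exponentiate:  a * Γ a ≤ Γ(a+b) * (a+b)^(1-b)
    have hexp : a * Real.Gamma a ≤ Real.Gamma (a + b) * (a + b) ^ (1 - b) := by
      have := Real.exp_le_exp.mpr key2
      rwa [Real.exp_add, Real.exp_add, Real.exp_log ha0, Real.exp_log hGa,
        Real.exp_log hGab, mul_comm (1 - b), Real.exp_mul, Real.exp_log hab] at this
    -- rearrange to (a/(a+b))^(1-b) ≤ ratio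
    have hapow : (0:ℝ) < a ^ b := Real.rpow_pos_of_pos ha0 b
    have habpow : (0:ℝ) < (a + b) ^ (1 - b) := Real.rpow_pos_of_pos hab _
    rw [Real.div_rpow (le_of_lt ha0) (le_of_lt hab), div_le_iff₀ (by positivity),
      gammaRatio]
    rw [div_mul_eq_mul_div, le_div_iff₀ (by positivity)]
    have haa : a ^ (1 - b) * (a ^ b * Real.Gamma a) = a * Real.Gamma a * 1 := by
      rw [← mul_assoc, ← Real.rpow_add ha0]
      norm_num
    calc a ^ (1 - b) * (a ^ b * Real.Gamma a) = a * Real.Gamma a := by rw [haa, mul_one]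
      _ ≤ Real.Gamma (a + b) * (a + b) ^ (1 - b) := hexp
  · -- upper bound
    filter_upwards [eventually_ge_atTop (1 : ℝ)] with a ha
    have ha0 : (0:ℝ) < a := by linarith
    have hab : (0:ℝ) < a + b := by linarith
    have hmem1 : a ∈ Set.Ioi (0:ℝ) := ha0
    have hmem2 : a + 1 ∈ Set.Ioi (0:ℝ) := by simp; linarith
    have key := hconv.2 hmem1 hmem2 (by linarith : (0:ℝ) ≤ 1 - b) hb0 (by ring)
    have heq : (1 - b) • a + b • (a + 1) = a + b := by simp [smul_eq_mul]; ring
    rw [heq] at key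
    simp only [Function.comp_apply, smul_eq_mul] at key
    have hG1 : Real.Gamma (a + 1) = a * Real.Gamma a := Real.Gamma_add_one (ne_of_gt ha0)
    have hGab : 0 < Real.Gamma (a + b) := Real.Gamma_pos_of_pos hab
    have hGa : 0 < Real.Gamma a := Real.Gamma_pos_of_pos ha0
    rw [hG1, Real.log_mul (ne_of_gt ha0) (ne_of_gt hGa)] at key
    have key2 : Real.log (Real.Gamma (a + b)) ≤ Real.log (Real.Gamma a) + b * Real.log a := by
      nlinarith
    have hexp : Real.Gamma (a + b) ≤ Real.Gamma a * a ^ b := by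
      have := Real.exp_le_exp.mpr key2
      rwa [Real.exp_add, Real.exp_log hGab, Real.exp_log hGa, mul_comm b,
        Real.exp_mul, Real.exp_log ha0] at this
    rw [gammaRatio]
    rw [div_le_one (by positivity)]
    linarith [hexp]

lemma gammaRatio_tendsto (b : ℝ) : Tendsto (gammaRatio b) atTop (nhds 1) := by
  have key : ∀ n : ℤ, ∀ c : ℝ, 0 ≤ c → c ≤ 1 →
      Tendsto (gammaRatio (c + n)) atTop (nhds 1) := by
    intro n
    induction n using Int.induction_on with
    | zero => intro c h0 h1; simpa using gammaRatio_base h0 h1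
    | succ k ih =>
      intro c h0 h1
      have := (gammaRatio_succ_iff (c + k)).mpr (ih c h0 h1)
      convert this using 2
      push_cast; ring
    | pred k ih =>
      intro c h0 h1
      have := (gammaRatio_succ_iff (c + (-(k:ℤ) - 1))).mp ?_
      · convert this using 2
        push_cast; ring
      · have := ih c h0 h1
        convert this using 2
        push_cast; ring
  have := key ⌊b⌋ (b - ⌊b⌋) (by linarith [Int.floor_le b])
    (by linarith [Int.lt_floor_add_one b])
  simpa using this

theorem gamma_ratio_tendsto_one (b : ℝ) :
    Tendsto (fun a : ℝ => Real.Gamma (a + b) / (a ^ b * Real.Gamma a)) atTop (nhds 1) := by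
  exact gammaRatio_tendsto b
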